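/- Let T > 0, let W : [0,T] → R^d be continuous and let X₀ ∈ R^d. Then: (a) there is a unique continuously differentiable X : [0,T) → R^d with X(0) = X₀ and X'(t) = (W(t) − X(t))/(T−t) for all t ∈ [0,T); (b) if moreover there are c > 0 and r₀ ∈ (0,1) such that |W(t) − W(T)| ≤ c √(2(T−t) log(1/(T−t))) whenever 0 < T−t ≤ r₀, then X(t) → W(T) as t → T. -/

import Mathlib

open Filter intervalIntegral

noncomputable section

set_option linter.unusedSectionVars false

namespace Stmt14

variable {F : Type*} [NormedAddCommGroup F] [NormedSpace ℝ F] [CompleteSpace F]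
variable {T : ℝ}

/-- integrability of `s ↦ ((T-s)^2)⁻¹ • V s` on intervals below `T`. -/
lemma int_g {V : ℝ → F} (hV : Continuous V) {a b : ℝ} (ha : a < T) (hb : b < T) :
    IntervalIntegrable (fun s => ((T - s)^2)⁻¹ • V s) MeasureTheory.volume a b := by
  apply ContinuousOn.intervalIntegrable
  have hsub : Set.uIcc a b ⊆ Set.Iio T :=
    Set.ordConnected_Iio.uIcc_subset ha hb
  have h1 : ContinuousOn (fun s : ℝ => ((T - s)^2)⁻¹) (Set.uIcc a b) := by
    apply ContinuousOn.inv₀ (by fun_prop)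
    intro x hx
    have hx2 : 0 < T - x := by have := hsub hx; simp at this; linarith
    positivity
  exact h1.smul hV.continuousOn

lemma int_gr {a b : ℝ} (ha : a < T) (hb : b < T) :
    IntervalIntegrable (fun s => ((T - s)^2)⁻¹) MeasureTheory.volume a b := by
  have := int_g (V := fun _ : ℝ => (1:ℝ)) continuous_const ha hb
  simpa using this

lemma int_gc {a b : ℝ} (ha : a < T) (hb : b < T) (c : ℝ) :
    IntervalIntegrable (fun s => ((T - s)^2)⁻¹ * c) MeasureTheory.volume a b := by
  simpa [smul_eq_mul] using int_g (V := fun _ : ℝ => c) continuous_const ha hb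

/-- The scalar integral `∫_a^b (T-s)^{-2} ds = (T-b)⁻¹ - (T-a)⁻¹`. -/
lemma integral_inv_sq {a b : ℝ} (ha : a < T) (hb : b < T) :
    ∫ s in a..b, ((T - s)^2)⁻¹ = (T - b)⁻¹ - (T - a)⁻¹ := by
  have hder : ∀ x ∈ Set.uIcc a b, HasDerivAt (fun s => (T - s)⁻¹) (((T - x)^2)⁻¹) x := by
    intro x hx
    have h1 : HasDerivAt (fun s : ℝ => T - s) (-1) x := by
      simpa using (hasDerivAt_id x).const_sub T
    have hx2 : 0 < T - x := by
      have := Set.ordConnected_Iio.uIcc_subset ha hb hx; simp at this; linarith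
    have h2 := h1.inv (by positivity : T - x ≠ 0)
    refine h2.congr_deriv ?_
    simp
  exact intervalIntegral.integral_eq_sub_of_hasDerivAt hder (int_gr ha hb)

lemma hasDeriv_inv_sub {t : ℝ} (ht : t < T) :
    HasDerivAt (fun s => (T - s)⁻¹) (((T - t)^2)⁻¹) t := by
  have h1 : HasDerivAt (fun s : ℝ => T - s) (-1) t := by
    simpa using (hasDerivAt_id t).const_sub T
  have ht2 : 0 < T - t := by linarith
  have h2 := h1.inv (by positivity : T - t ≠ 0)
  refine h2.congr_deriv ?_
  simp

end Stmt14

open Stmt14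

set_option maxHeartbeats 1000000 in
/-- Lemma 4.1, deterministic pathwise content. For `W : [0,T] → ℝ^d`
continuous and `X₀ ∈ ℝ^d`:
(a) there is a unique continuously differentiable solution on `[0,T)` of
`X' (t) = (W(t) - X(t))/(T-t)`, `X(0) = X₀`;
(b) if `W` satisfies the Brownian-type modulus bound
`|W(t) - W(T)| ≤ c √(2(T-t) log(1/(T-t)))` for `T - t` small, then `X(t) → W(T)` as `t → T`. -/
theorem statement14 {d : ℕ} (T : ℝ) (hT : 0 < T)
    (W : ℝ → EuclideanSpace ℝ (Fin d)) (hW : ContinuousOn W (Set.Icc 0 T))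
    (X₀ : EuclideanSpace ℝ (Fin d)) :
    ∃ X : ℝ → EuclideanSpace ℝ (Fin d),
      (X 0 = X₀ ∧ ∀ t ∈ Set.Ico (0:ℝ) T, HasDerivAt X ((T - t)⁻¹ • (W t - X t)) t) ∧
      (∀ Y : ℝ → EuclideanSpace ℝ (Fin d), Y 0 = X₀ →
        (∀ t ∈ Set.Ico (0:ℝ) T, HasDerivAt Y ((T - t)⁻¹ • (W t - Y t)) t) →
        Set.EqOn X Y (Set.Ico 0 T)) ∧
      ((∃ c > (0:ℝ), ∃ r₀ ∈ Set.Ioo (0:ℝ) 1, ∀ t : ℝ, 0 < T - t → T - t ≤ r₀ →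
          ‖W t - W T‖ ≤ c * Real.sqrt (2 * (T - t) * Real.log (1 / (T - t)))) →
        Tendsto X (nhdsWithin T (Set.Iio T)) (nhds (W T))) := by
  classical
  set V : ℝ → EuclideanSpace ℝ (Fin d) := fun t => W (max 0 (min t T)) with hVdef
  have hVc : Continuous V := by
    apply hW.comp_continuous (by fun_prop)
    intro x
    exact ⟨le_max_left _ _, max_le hT.le (min_le_right _ _)⟩
  have hVeq : ∀ t, 0 ≤ t → t ≤ T → V t = W t := by
    intro t ht0 htT
    simp only [hVdef, min_eq_left htT, max_eq_right ht0]
  set g : ℝ → EuclideanSpace ℝ (Fin d) := fun s => ((T - s)^2)⁻¹ • V s with hgdef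
  set Fi : ℝ → EuclideanSpace ℝ (Fin d) := fun t => ∫ s in (0:ℝ)..t, g s with hFdef
  set X : ℝ → EuclideanSpace ℝ (Fin d) := fun t => (T - t) • (T⁻¹ • X₀ + Fi t) with hXdef
  have hgcont : ContinuousOn g (Set.Iio T) := by
    apply ContinuousOn.fun_smul _ hVc.continuousOn
    apply ContinuousOn.inv₀ (by fun_prop)
    intro x hx
    have hx2 : 0 < T - x := by simp at hx; linarith
    positivity
  have hFderiv : ∀ t, t < T → HasDerivAt Fi (g t) t := by
    intro t ht
    exact intervalIntegral.integral_hasDerivAt_right (int_g hVc hT ht)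
      (hgcont.stronglyMeasurableAtFilter isOpen_Iio t ht)
      (hgcont.continuousAt (Iio_mem_nhds ht))
  have hXderiv : ∀ t, t < T →
      HasDerivAt X ((T - t) • g t + (-1 : ℝ) • (T⁻¹ • X₀ + Fi t)) t := by
    intro t ht
    have h1 : HasDerivAt (fun s : ℝ => T - s) (-1) t := by
      simpa using (hasDerivAt_id t).const_sub T
    exact h1.smul ((hFderiv t ht).const_add _)
  have hX0 : X 0 = X₀ := by
    simp only [hXdef, hFdef, intervalIntegral.integral_same, sub_zero, add_zero,
      smul_smul, mul_inv_cancel₀ hT.ne', one_smul]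
  have hkey : ∀ t ∈ Set.Ico (0:ℝ) T, HasDerivAt X ((T - t)⁻¹ • (W t - X t)) t := by
    intro t ht
    have htT : t < T := ht.2
    have hpos : 0 < T - t := by linarith
    have hne : T - t ≠ 0 := by positivity
    have hVt : V t = W t := hVeq t ht.1 htT.le
    have heq : (T - t)⁻¹ • (W t - X t)
        = (T - t) • g t + (-1 : ℝ) • (T⁻¹ • X₀ + Fi t) := by
      have hg : g t = ((T - t)^2)⁻¹ • W t := by rw [hgdef]; simp only [hVt]
      have hX : X t = (T - t) • (T⁻¹ • X₀ + Fi t) := rfl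
      rw [hg, hX, smul_sub, smul_smul, smul_smul, inv_mul_cancel₀ hne,
        one_smul, neg_one_smul]
      have h2 : (T - t) * ((T - t)^2)⁻¹ = (T - t)⁻¹ := by
        rw [sq, mul_inv, ← mul_assoc, mul_inv_cancel₀ hne, one_mul]
      rw [h2]
      abel
    rw [heq]
    exact hXderiv t htT
  refine ⟨X, ⟨hX0, hkey⟩, ?_, ?_⟩
  · -- uniqueness
    intro Y hY0 hYd t ht
    have htT : t < T := ht.2
    set h : ℝ → EuclideanSpace ℝ (Fin d) := fun s => (T - s)⁻¹ • (X s - Y s) with hhdef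
    have hhderiv : ∀ s ∈ Set.Ico (0:ℝ) T, HasDerivAt h 0 s := by
      intro s hs
      have hsT : s < T := hs.2
      have hpos : 0 < T - s := by linarith
      have hne : T - s ≠ 0 := by positivity
      have hc := hasDeriv_inv_sub (T := T) hsT
      have hf := (hkey s hs).sub (hYd s hs)
      have := hc.smul hf
      refine this.congr_deriv ?_
      have h1 : (T - s)⁻¹ • (W s - X s) - (T - s)⁻¹ • (W s - Y s)
          = (T - s)⁻¹ • (Y s - X s) := by
        rw [← smul_sub]; congr 1; abel
      rw [h1, smul_smul, ← mul_inv, ← sq, ← smul_add]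
      have h2 : Y s - X s + (X s - Y s) = 0 := by abel
      rw [Pi.sub_apply, h2, smul_zero]
    -- h is constant on [0, t], equal to h 0 = 0
    have hcont : ContinuousOn h (Set.Icc 0 t) := by
      intro s hs
      have hs' : s ∈ Set.Ico (0:ℝ) T := ⟨hs.1, lt_of_le_of_lt hs.2 htT⟩
      exact ((hhderiv s hs').differentiableAt.continuousAt).continuousWithinAt
    have hder : ∀ s ∈ Set.Ico (0:ℝ) t, HasDerivWithinAt h 0 (Set.Ici s) s := by
      intro s hs
      exact ((hhderiv s ⟨hs.1, lt_of_lt_of_le hs.2 htT.le⟩).hasDerivWithinAt)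
    have hht := constant_of_has_deriv_right_zero hcont hder t ⟨ht.1, le_refl t⟩
    have hh0 : h 0 = 0 := by
      simp only [hhdef, hX0, hY0, sub_self, smul_zero]
    rw [hh0] at hht
    have hne : (T - t)⁻¹ ≠ 0 := by
      have : 0 < T - t := by linarith
      positivity
    have := (smul_eq_zero.mp hht).resolve_left hne
    exact sub_eq_zero.mp this
  · -- convergence
    intro _hmod
    have hVT : V T = W T := hVeq T hT.le (le_refl T)
    -- key identity for X t - W T
    have hXsub : ∀ t, 0 ≤ t → t < T →
        X t - W T = (T - t) • (T⁻¹ • (X₀ - W T)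
          + ∫ s in (0:ℝ)..t, ((T - s)^2)⁻¹ • (V s - W T)) := by
      intro t ht0 htT
      have hneT : T ≠ 0 := hT.ne'
      have hpos : 0 < T - t := by linarith
      have hnet : T - t ≠ 0 := by positivity
      have hJ : (∫ s in (0:ℝ)..t, ((T - s)^2)⁻¹ • (V s - W T))
          = Fi t - ((T - t)⁻¹ - T⁻¹) • W T := by
        have h1 : (∫ s in (0:ℝ)..t, ((T - s)^2)⁻¹ • (V s - W T))
            = (∫ s in (0:ℝ)..t, ((T - s)^2)⁻¹ • V s)
              - ∫ s in (0:ℝ)..t, ((T - s)^2)⁻¹ • W T := by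
          rw [← intervalIntegral.integral_sub (int_g hVc hT htT)
            (int_g continuous_const hT htT)]
          congr 1
          ext s
          rw [smul_sub]
        rw [h1, intervalIntegral.integral_smul_const, integral_inv_sq hT htT]
        simp [hFdef]
        rfl
      have hone : (T - t) * (T⁻¹ + ((T - t)⁻¹ - T⁻¹)) = 1 := by
        field_simp
        ring
      calc X t - W T
          = (T - t) • (T⁻¹ • X₀ + Fi t)
            - ((T - t) * (T⁻¹ + ((T - t)⁻¹ - T⁻¹))) • W T := by
            rw [hone, one_smul]
        _ = (T - t) • (T⁻¹ • (X₀ - W T) + (Fi t - ((T - t)⁻¹ - T⁻¹) • W T)) := by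
            module
        _ = (T - t) • (T⁻¹ • (X₀ - W T)
              + ∫ s in (0:ℝ)..t, ((T - s)^2)⁻¹ • (V s - W T)) := by rw [hJ]
    rw [Metric.tendsto_nhdsWithin_nhds]
    intro ε hε
    obtain ⟨δ₁, hδ₁, hδ₁p⟩ := Metric.continuousAt_iff.mp (hVc.continuousAt) (ε/3) (by linarith)
    set t₁ : ℝ := max 0 (T - δ₁/2) with ht₁def
    have ht₁0 : 0 ≤ t₁ := le_max_left _ _
    have ht₁T : t₁ < T := max_lt hT (by linarith)
    have hnear : ∀ s, t₁ ≤ s → s ≤ T → ‖V s - W T‖ ≤ ε/3 := by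
      intro s hs1 hs2
      have hds : dist s T < δ₁ := by
        rw [Real.dist_eq, abs_of_nonpos (by linarith)]
        have : T - δ₁/2 ≤ t₁ := le_max_right _ _
        linarith
      have := hδ₁p hds
      rw [hVT, dist_eq_norm] at this
      linarith
    set K : ℝ := ∫ s in (0:ℝ)..t₁, ((T - s)^2)⁻¹ * ‖V s - W T‖ with hKdef
    have hK0 : 0 ≤ K := by
      apply intervalIntegral.integral_nonneg ht₁0
      intro s _
      positivity
    set A : ℝ := T⁻¹ * ‖X₀ - W T‖ with hAdef
    have hA0 : 0 ≤ A := by positivity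
    refine ⟨min (T - t₁) ((ε/3)/(A + K + 1)), ?_, ?_⟩
    · apply lt_min (by linarith)
      positivity
    intro t htIio htdist
    have htT : t < T := htIio
    have hdist : T - t < min (T - t₁) ((ε/3)/(A + K + 1)) := by
      rw [Real.dist_eq, abs_of_nonpos (by linarith)] at htdist
      linarith
    have ht₁t : t₁ < t := by
      have := lt_of_lt_of_le hdist (min_le_left _ _)
      linarith
    have ht0 : 0 < t := lt_of_le_of_lt ht₁0 ht₁t
    have hpos : 0 < T - t := by linarith
    -- integrability facts
    have hint1 : IntervalIntegrable (fun s => ((T - s)^2)⁻¹ • (V s - W T))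
        MeasureTheory.volume 0 t₁ := int_g (by fun_prop) hT ht₁T
    have hint2 : IntervalIntegrable (fun s => ((T - s)^2)⁻¹ • (V s - W T))
        MeasureTheory.volume t₁ t := int_g (by fun_prop) ht₁T htT
    have hintn1 : IntervalIntegrable (fun s => ((T - s)^2)⁻¹ * ‖V s - W T‖)
        MeasureTheory.volume 0 t₁ := by
      simpa [smul_eq_mul] using int_g (V := fun s => ‖V s - W T‖) (by fun_prop) hT ht₁T
    have hintn2 : IntervalIntegrable (fun s => ((T - s)^2)⁻¹ * ‖V s - W T‖)
        MeasureTheory.volume t₁ t := by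
      simpa [smul_eq_mul] using int_g (V := fun s => ‖V s - W T‖) (by fun_prop) ht₁T htT
    have hnormeq : (fun s => ‖((T - s)^2)⁻¹ • (V s - W T)‖)
        = fun s => ((T - s)^2)⁻¹ * ‖V s - W T‖ := by
      ext s
      rw [norm_smul, Real.norm_eq_abs, abs_of_nonneg (by positivity)]
    -- split the integral
    have hsplit : (∫ s in (0:ℝ)..t, ((T - s)^2)⁻¹ • (V s - W T))
        = (∫ s in (0:ℝ)..t₁, ((T - s)^2)⁻¹ • (V s - W T))
          + ∫ s in t₁..t, ((T - s)^2)⁻¹ • (V s - W T) :=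
      (intervalIntegral.integral_add_adjacent_intervals hint1 hint2).symm
    -- bound pieces
    have hJ1 : ‖∫ s in (0:ℝ)..t₁, ((T - s)^2)⁻¹ • (V s - W T)‖ ≤ K := by
      have := intervalIntegral.norm_integral_le_integral_norm (f := fun s => ((T - s)^2)⁻¹ • (V s - W T)) (μ := MeasureTheory.volume) ht₁0
      rw [hnormeq] at this
      exact this
    have hJ2 : ‖∫ s in t₁..t, ((T - s)^2)⁻¹ • (V s - W T)‖ ≤ (T - t)⁻¹ * (ε/3) := by
      have h1 := intervalIntegral.norm_integral_le_integral_norm (f := fun s => ((T - s)^2)⁻¹ • (V s - W T)) (μ := MeasureTheory.volume) ht₁t.le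
      rw [hnormeq] at h1
      have h2 : (∫ s in t₁..t, ((T - s)^2)⁻¹ * ‖V s - W T‖)
          ≤ ∫ s in t₁..t, ((T - s)^2)⁻¹ * (ε/3) := by
        apply intervalIntegral.integral_mono_on ht₁t.le hintn2 (int_gc ht₁T htT _)
        intro s hs
        have hb := hnear s hs.1 (le_trans hs.2 htT.le)
        have hnn : (0:ℝ) ≤ ((T - s)^2)⁻¹ := by positivity
        exact mul_le_mul_of_nonneg_left hb hnn
      have h3 : (∫ s in t₁..t, ((T - s)^2)⁻¹ * (ε/3))
          = ((T - t)⁻¹ - (T - t₁)⁻¹) * (ε/3) := by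
        rw [intervalIntegral.integral_mul_const, integral_inv_sq ht₁T htT]
      have h4 : ((T - t)⁻¹ - (T - t₁)⁻¹) * (ε/3) ≤ (T - t)⁻¹ * (ε/3) := by
        have hp1 : 0 < T - t₁ := by linarith
        have : (0:ℝ) ≤ (T - t₁)⁻¹ := by positivity
        nlinarith
      linarith
    -- main estimate
    rw [dist_eq_norm, hXsub t ht0.le htT, norm_smul, Real.norm_eq_abs,
      abs_of_pos hpos, hsplit]
    have hnorm : ‖T⁻¹ • (X₀ - W T)
        + ((∫ s in (0:ℝ)..t₁, ((T - s)^2)⁻¹ • (V s - W T))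
          + ∫ s in t₁..t, ((T - s)^2)⁻¹ • (V s - W T))‖
        ≤ A + K + (T - t)⁻¹ * (ε/3) := by
      have hA' : ‖T⁻¹ • (X₀ - W T)‖ = A := by
        rw [norm_smul, Real.norm_eq_abs, abs_of_nonneg (by positivity)]
      calc ‖T⁻¹ • (X₀ - W T)
          + ((∫ s in (0:ℝ)..t₁, ((T - s)^2)⁻¹ • (V s - W T))
            + ∫ s in t₁..t, ((T - s)^2)⁻¹ • (V s - W T))‖
          ≤ ‖T⁻¹ • (X₀ - W T)‖
            + (‖∫ s in (0:ℝ)..t₁, ((T - s)^2)⁻¹ • (V s - W T)‖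
              + ‖∫ s in t₁..t, ((T - s)^2)⁻¹ • (V s - W T)‖) :=
            le_trans (norm_add_le _ _) (by gcongr; exact norm_add_le _ _)
        _ ≤ A + (K + (T - t)⁻¹ * (ε/3)) := by rw [hA']; gcongr
        _ = A + K + (T - t)⁻¹ * (ε/3) := by ring
    have hfinal : (T - t) * (A + K + (T - t)⁻¹ * (ε/3)) < ε := by
      have hmul : (T - t) * ((T - t)⁻¹ * (ε/3)) = ε/3 := by
        field_simp
      have hlt : T - t < (ε/3)/(A + K + 1) := lt_of_lt_of_le hdist (min_le_right _ _)
      have hpos1 : (0:ℝ) < A + K + 1 := by linarith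
      have hAK : (T - t) * (A + K + 1) < ε/3 := by
        calc (T - t) * (A + K + 1) < (ε/3)/(A + K + 1) * (A + K + 1) :=
              mul_lt_mul_of_pos_right hlt hpos1
          _ = ε/3 := div_mul_cancel₀ _ hpos1.ne'
      nlinarith
    calc (T - t) * ‖T⁻¹ • (X₀ - W T)
        + ((∫ s in (0:ℝ)..t₁, ((T - s)^2)⁻¹ • (V s - W T))
          + ∫ s in t₁..t, ((T - s)^2)⁻¹ • (V s - W T))‖
        ≤ (T - t) * (A + K + (T - t)⁻¹ * (ε/3)) := by
          apply mul_le_mul_of_nonneg_left hnorm hpos.le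
      _ < ε := hfinal
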